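/- arXiv:1604.04706 — 2 statements merged into one kernel-verified Lean document; each statement's English description precedes it below -/
import Mathlib

section
/- If b_i = -log Σ_{k=1}^K exp(w_k^T x_i) for every i, then the doubly-separable objective L_2(W,B) = Σ_{i,k} [ (λ/(2N))||w_k||² - y_{ik} w_k^T x_i/N + exp(w_k^T x_i + b_i) - b_i/(KN) - 1/K ] equals the original MLR objective L_1(W) = (λ/2)Σ_k||w_k||² - (1/N)Σ_{i,k} y_{ik} w_k^T x_i + (1/N)Σ_i log Σ_k exp(w_k^T x_i). -/
/-- If each `bᵢ = -log ∑ₖ exp(wₖᵀxᵢ)`, then the doubly-separable objective `L₂(W, B)`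
equals the original MLR objective `L₁(W)`. -/
theorem dsmlr_eq_mlr_at_optimal_b (d N K : ℕ) (hN : 0 < N) (hK : 0 < K)
    (lam : ℝ) (hlam : 0 < lam)
    (x : Fin N → EuclideanSpace ℝ (Fin d)) (y : Fin N → Fin K → ℝ)
    (hy01 : ∀ i k, y i k = 0 ∨ y i k = 1) (hy : ∀ i, ∑ k, y i k = 1)
    (W : Fin K → EuclideanSpace ℝ (Fin d)) (b : Fin N → ℝ)
    (hb : ∀ i, b i = -Real.log (∑ k, Real.exp (inner ℝ (W k) (x i) : ℝ))) :
    (∑ i, ∑ k,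
      (lam / (2 * N) * ‖W k‖ ^ 2 - y i k * (inner ℝ (W k) (x i) : ℝ) / N
        + Real.exp ((inner ℝ (W k) (x i) : ℝ) + b i) - b i / (K * N) - 1 / K))
    = lam / 2 * ∑ k, ‖W k‖ ^ 2
      - (1 / N) * ∑ i, ∑ k, y i k * (inner ℝ (W k) (x i) : ℝ)
      + (1 / N) * ∑ i, Real.log (∑ k, Real.exp (inner ℝ (W k) (x i) : ℝ)) := by
  have hNpos : (0:ℝ) < N := by exact_mod_cast hN
  have hKpos : (0:ℝ) < K := by exact_mod_cast hK
  have hS : ∀ i, (0:ℝ) < ∑ k, Real.exp (inner ℝ (W k) (x i) : ℝ) := fun i =>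
    Finset.sum_pos (fun k _ => Real.exp_pos _) ⟨⟨0, hK⟩, Finset.mem_univ _⟩
  have key : ∀ i : Fin N,
      (∑ k, (lam / (2 * N) * ‖W k‖ ^ 2 - y i k * (inner ℝ (W k) (x i) : ℝ) / N
        + Real.exp ((inner ℝ (W k) (x i) : ℝ) + b i) - b i / (K * N) - 1 / K))
      = lam / (2 * N) * ∑ k, ‖W k‖ ^ 2
        - (∑ k, y i k * (inner ℝ (W k) (x i) : ℝ)) / N
        + Real.log (∑ k, Real.exp (inner ℝ (W k) (x i) : ℝ)) / N := by
    intro i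
    have hexp : ∑ k, Real.exp ((inner ℝ (W k) (x i) : ℝ) + b i) = 1 := by
      have : ∀ k : Fin K, Real.exp ((inner ℝ (W k) (x i) : ℝ) + b i)
          = Real.exp (inner ℝ (W k) (x i) : ℝ) * Real.exp (b i) := fun k => Real.exp_add _ _
      rw [Finset.sum_congr rfl (fun k _ => this k), ← Finset.sum_mul, hb i,
        Real.exp_neg, Real.exp_log (hS i)]
      exact mul_inv_cancel₀ (hS i).ne'
    have hbb : b i = -Real.log (∑ k, Real.exp (inner ℝ (W k) (x i) : ℝ)) := hb i
    simp only [Finset.sum_sub_distrib, Finset.sum_add_distrib]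
    rw [hexp]
    simp only [Finset.sum_const, Finset.card_univ, Fintype.card_fin, nsmul_eq_mul,
      ← Finset.sum_div, ← Finset.mul_sum]
    rw [hbb]
    field_simp
    ring
  rw [Finset.sum_congr rfl (fun i _ => key i)]
  simp only [Finset.sum_sub_distrib, Finset.sum_add_distrib, Finset.sum_const,
    Finset.card_univ, Fintype.card_fin, nsmul_eq_mul, ← Finset.sum_div]
  field_simp
end

section
/- Gradient error lemma: Let a(W) = -log Σ_c exp(x^T w_c). For two parameter matrices W, W' ∈ (R^d)^K with each column bounded by R in norm and ||x|| ≤ r, define the approximate gradient G̃ with c-th block λ w'_c - [y = c] x + exp(x^T w'_c + a(W)) x and the true gradient ∇f(W') with c-th block λ w'_c - [y = c] x + exp(x^T w'_c + a(W')) x. Then ||G̃ - ∇f(W')|| ≤ C(r, R, K) ||W' - W|| for a constant C(r,R,K) depending only on r, R, K (and in particular independent of d). -/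
lemma exp_lip (M a b : ℝ) (ha : a ≤ M) (hb : b ≤ M) :
    |Real.exp a - Real.exp b| ≤ Real.exp M * |a - b| := by
  wlog h : b ≤ a generalizing a b
  · rw [abs_sub_comm, abs_sub_comm a b]
    exact this b a hb ha (le_of_not_ge h)
  have h1 : Real.exp a * (1 + (b - a)) ≤ Real.exp b := by
    have h2 := Real.add_one_le_exp (b - a)
    have h3 : Real.exp a * ((b - a) + 1) ≤ Real.exp a * Real.exp (b - a) :=
      mul_le_mul_of_nonneg_left h2 (Real.exp_pos a).le
    calc Real.exp a * (1 + (b - a)) = Real.exp a * ((b - a) + 1) := by ring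
      _ ≤ Real.exp a * Real.exp (b - a) := h3
      _ = Real.exp b := by rw [← Real.exp_add]; ring_nf
  have hba : 0 ≤ Real.exp a - Real.exp b := sub_nonneg.2 (Real.exp_le_exp.2 h)
  rw [abs_of_nonneg hba, abs_of_nonneg (sub_nonneg.2 h)]
  have hM : Real.exp a ≤ Real.exp M := Real.exp_le_exp.2 ha
  nlinarith [Real.exp_pos a]

/-- Gradient error lemma: there is a constant `C` depending only on `r`, `R`, `K` (not on
the dimension `d`) such that for all bounded parameter matrices `W, W'` and any data point
`x` with `‖x‖ ≤ r`, the approximate gradient `G̃` (using the out-of-date variational value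
`a(W)`) deviates from the true gradient `∇f(W')` by at most `C‖W' - W‖`. The `c`-th block
of `G̃ - ∇f(W')` is `exp(xᵀw'_c)(1/∑ⱼexp(xᵀwⱼ) - 1/∑ⱼexp(xᵀw'ⱼ))x`. -/
theorem gradient_error_lemma (K : ℕ) (hK : 0 < K) (r R : ℝ) (hr : 0 ≤ r) (hR : 0 ≤ R) :
    ∃ C : ℝ, 0 ≤ C ∧
      ∀ (d : ℕ) (lam : ℝ) (_ : 0 < lam) (y : Fin K)
        (x : EuclideanSpace ℝ (Fin d)) (_ : ‖x‖ ≤ r)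
        (W W' : Fin K → EuclideanSpace ℝ (Fin d))
        (_ : ∀ c, ‖W c‖ ≤ R) (_ : ∀ c, ‖W' c‖ ≤ R),
        Real.sqrt (∑ c, ‖(Real.exp (inner ℝ x (W' c) : ℝ) *
            (1 / (∑ j, Real.exp (inner ℝ x (W j) : ℝ))
              - 1 / (∑ j, Real.exp (inner ℝ x (W' j) : ℝ)))) • x‖ ^ 2)
          ≤ C * Real.sqrt (∑ c, ‖W' c - W c‖ ^ 2) := by
  refine ⟨(K : ℝ) * r ^ 2 * Real.exp (4 * (r * R)), by positivity, ?_⟩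
  intro d lam _ y x hx W W' hW hW'
  set E := Real.exp (r * R) with hE
  have hE1 : (1 : ℝ) ≤ E := Real.one_le_exp (by positivity)
  have hE0 : 0 < E := Real.exp_pos _
  set D := Real.sqrt (∑ c, ‖W' c - W c‖ ^ 2) with hDdef
  have hD0 : 0 ≤ D := Real.sqrt_nonneg _
  have hK' : (0 : ℝ) < K := by exact_mod_cast hK
  -- inner product bounds
  have hip : ∀ (V : Fin K → EuclideanSpace ℝ (Fin d)), (∀ c, ‖V c‖ ≤ R) →
      ∀ c, |(inner ℝ x (V c) : ℝ)| ≤ r * R := by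
    intro V hV c
    calc |(inner ℝ x (V c) : ℝ)| ≤ ‖x‖ * ‖V c‖ := abs_real_inner_le_norm x (V c)
      _ ≤ r * R := mul_le_mul hx (hV c) (norm_nonneg _) hr
  have hipW := hip W hW
  have hipW' := hip W' hW'
  have hDc : ∀ c, ‖W' c - W c‖ ≤ D := by
    intro c
    have h1 : ‖W' c - W c‖ ^ 2 ≤ ∑ j, ‖W' j - W j‖ ^ 2 :=
      Finset.single_le_sum (f := fun j => ‖W' j - W j‖ ^ 2) (fun j _ => sq_nonneg _)
        (Finset.mem_univ c)
    calc ‖W' c - W c‖ = Real.sqrt (‖W' c - W c‖ ^ 2) := (Real.sqrt_sq (norm_nonneg _)).symm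
      _ ≤ D := Real.sqrt_le_sqrt h1
  set S := ∑ j, Real.exp ((inner ℝ x (W j)) : ℝ) with hSdef
  set S' := ∑ j, Real.exp ((inner ℝ x (W' j)) : ℝ) with hS'def
  -- lower bounds
  have hlb : ∀ (V : Fin K → EuclideanSpace ℝ (Fin d)), (∀ c, |(inner ℝ x (V c) : ℝ)| ≤ r * R) →
      (K : ℝ) / E ≤ ∑ j, Real.exp ((inner ℝ x (V j)) : ℝ) := by
    intro V hV
    have : ∀ j ∈ Finset.univ, Real.exp (-(r * R)) ≤ Real.exp ((inner ℝ x (V j)) : ℝ) := by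
      intro j _
      exact Real.exp_le_exp.2 (neg_le_of_abs_le (hV j))
    calc (K : ℝ) / E = ∑ _j : Fin K, Real.exp (-(r * R)) := by
          rw [Finset.sum_const, Finset.card_univ, Fintype.card_fin, nsmul_eq_mul,
            Real.exp_neg, hE, div_eq_mul_inv]
      _ ≤ _ := Finset.sum_le_sum this
  have hS_lb : (K : ℝ) / E ≤ S := hlb W hipW
  have hS'_lb : (K : ℝ) / E ≤ S' := hlb W' hipW'
  have hS_pos : 0 < S := lt_of_lt_of_le (by positivity) hS_lb
  have hS'_pos : 0 < S' := lt_of_lt_of_le (by positivity) hS'_lb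
  -- difference of sums
  have hdiff : |S' - S| ≤ E * r * K * D := by
    have h1 : S' - S = ∑ j, (Real.exp ((inner ℝ x (W' j)) : ℝ) - Real.exp ((inner ℝ x (W j)) : ℝ)) := by
      rw [Finset.sum_sub_distrib]
    have h2 : ∀ j ∈ Finset.univ,
        |Real.exp ((inner ℝ x (W' j)) : ℝ) - Real.exp ((inner ℝ x (W j)) : ℝ)| ≤ E * (r * D) := by
      intro j _
      have hlip := exp_lip (r * R) ((inner ℝ x (W' j)) : ℝ) ((inner ℝ x (W j)) : ℝ)
        (le_of_abs_le (hipW' j)) (le_of_abs_le (hipW j))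
      have hinner : |((inner ℝ x (W' j)) : ℝ) - ((inner ℝ x (W j)) : ℝ)| ≤ r * D := by
        rw [← inner_sub_right]
        calc |(inner ℝ x (W' j - W j) : ℝ)| ≤ ‖x‖ * ‖W' j - W j‖ := abs_real_inner_le_norm _ _
          _ ≤ r * D := mul_le_mul hx (hDc j) (norm_nonneg _) hr
      calc |Real.exp ((inner ℝ x (W' j)) : ℝ) - Real.exp ((inner ℝ x (W j)) : ℝ)|
          ≤ E * |((inner ℝ x (W' j)) : ℝ) - ((inner ℝ x (W j)) : ℝ)| := hlip
        _ ≤ E * (r * D) := mul_le_mul_of_nonneg_left hinner hE0.le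
    calc |S' - S| = |∑ j, (Real.exp ((inner ℝ x (W' j)) : ℝ) - Real.exp ((inner ℝ x (W j)) : ℝ))| := by
          rw [h1]
      _ ≤ ∑ j, |Real.exp ((inner ℝ x (W' j)) : ℝ) - Real.exp ((inner ℝ x (W j)) : ℝ)| :=
          Finset.abs_sum_le_sum_abs _ _
      _ ≤ ∑ _j : Fin K, E * (r * D) := Finset.sum_le_sum h2
      _ = E * r * K * D := by
          rw [Finset.sum_const, Finset.card_univ, Fintype.card_fin, nsmul_eq_mul]; ring
  -- bound on 1/S - 1/S'
  have hinv : |1 / S - 1 / S'| ≤ E ^ 3 * r * D / K := by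
    have h1 : 1 / S - 1 / S' = (S' - S) / (S * S') := by
      field_simp
    have hSS' : (K : ℝ) / E * ((K : ℝ) / E) ≤ S * S' :=
      mul_le_mul hS_lb hS'_lb (by positivity) hS_pos.le
    have h2 : |1 / S - 1 / S'| = |S' - S| / (S * S') := by
      rw [h1, abs_div, abs_of_pos (mul_pos hS_pos hS'_pos)]
    rw [h2]
    have h3 : |S' - S| / (S * S') ≤ |S' - S| / ((K : ℝ) / E * ((K : ℝ) / E)) :=
      div_le_div_of_nonneg_left (abs_nonneg _) (by positivity) hSS'
    calc |S' - S| / (S * S') ≤ |S' - S| / ((K : ℝ) / E * ((K : ℝ) / E)) := h3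
      _ ≤ (E * r * K * D) / ((K : ℝ) / E * ((K : ℝ) / E)) := by
          gcongr
      _ = E ^ 3 * r * D / K := by
          field_simp
  -- per-coordinate bound
  set B := E ^ 4 * r * D / K with hBdef
  have hB0 : 0 ≤ B := by positivity
  have hterm : ∀ c : Fin K,
      ‖(Real.exp ((inner ℝ x (W' c)) : ℝ) * (1 / S - 1 / S')) • x‖ ≤ B * r := by
    intro c
    rw [norm_smul, Real.norm_eq_abs, abs_mul, Real.abs_exp]
    have h1 : Real.exp ((inner ℝ x (W' c)) : ℝ) ≤ E := Real.exp_le_exp.2 (le_of_abs_le (hipW' c))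
    have h2 : Real.exp ((inner ℝ x (W' c)) : ℝ) * |1 / S - 1 / S'| ≤ E * (E ^ 3 * r * D / K) :=
      mul_le_mul h1 hinv (abs_nonneg _) hE0.le
    have h3 : E * (E ^ 3 * r * D / K) = B := by rw [hBdef]; ring
    exact mul_le_mul (h3 ▸ h2) hx (norm_nonneg _) hB0
  -- assemble
  have hsum : (∑ c : Fin K, ‖(Real.exp ((inner ℝ x (W' c)) : ℝ) * (1 / S - 1 / S')) • x‖ ^ 2)
      ≤ ((K : ℝ) * (B * r)) ^ 2 := by
    calc (∑ c : Fin K, ‖(Real.exp ((inner ℝ x (W' c)) : ℝ) * (1 / S - 1 / S')) • x‖ ^ 2)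
        ≤ ∑ _c : Fin K, (B * r) ^ 2 := by
          apply Finset.sum_le_sum
          intro c _
          exact pow_le_pow_left₀ (norm_nonneg _) (hterm c) 2
      _ = (K : ℝ) * (B * r) ^ 2 := by
          rw [Finset.sum_const, Finset.card_univ, Fintype.card_fin, nsmul_eq_mul]
      _ ≤ ((K : ℝ) * (B * r)) ^ 2 := by
          have : (1 : ℝ) ≤ K := by exact_mod_cast hK
          nlinarith [sq_nonneg (B * r)]
  calc Real.sqrt (∑ c : Fin K, ‖(Real.exp ((inner ℝ x (W' c)) : ℝ) * (1 / S - 1 / S')) • x‖ ^ 2)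
      ≤ Real.sqrt (((K : ℝ) * (B * r)) ^ 2) := Real.sqrt_le_sqrt hsum
    _ = (K : ℝ) * (B * r) := Real.sqrt_sq (by positivity)
    _ = E ^ 4 * r ^ 2 * D := by
        rw [hBdef]; field_simp
    _ ≤ (K : ℝ) * r ^ 2 * Real.exp (4 * (r * R)) * D := by
        have hE4 : E ^ 4 = Real.exp (4 * (r * R)) := by
          rw [hE, ← Real.exp_nat_mul]; norm_num
        rw [← hE4]
        have hK1 : (1 : ℝ) ≤ K := by exact_mod_cast hK
        nlinarith [pow_pos hE0 4, sq_nonneg r, mul_nonneg (mul_nonneg (pow_pos hE0 4).le (sq_nonneg r)) hD0]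
end
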